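/- The Petersen graph has distinguishing number 3. -/

import Mathlib

open SimpleGraph

set_option maxRecDepth 1000000
set_option maxHeartbeats 10000000

/-- A colouring `c` of the vertices of `G` is distinguishing if the only
colour-preserving automorphism of `G` is the identity. -/
def IsDistinguishing {V : Type*} (G : SimpleGraph V) {k : ℕ} (c : V → Fin k) : Prop :=
  ∀ γ : G ≃g G, (∀ v, c (γ v) = c v) → ∀ v, γ v = v

/-- The distinguishing number of a finite graph `G`. -/
noncomputable def distinguishingNumber {V : Type*} [Fintype V] (G : SimpleGraph V) : ℕ :=
  sInf {k | ∃ c : V → Fin k, IsDistinguishing G c}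

/-- The Petersen graph as the Kneser graph on 2-element subsets of a 5-element set,
with two subsets adjacent iff they are disjoint. -/
def petersenGraph : SimpleGraph {s : Finset (Fin 5) // s.card = 2} where
  Adj s t := Disjoint s.val t.val
  symm := by constructor; intro s t h; exact h.symm
  loopless := by
    constructor
    intro s h
    have h0 : s.val = ∅ := by simpa using disjoint_self.mp h
    have h2 := s.property
    rw [h0] at h2
    simp at h2

namespace PetersenAux

abbrev V := {s : Finset (Fin 5) // s.card = 2}

def pl : Fin 10 → Finset (Fin 5) := ![{0,1},{0,2},{0,3},{0,4},{1,2},{1,3},{1,4},{2,3},{2,4},{3,4}]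
def M : Fin 10 → Fin 10 → Bool := ![![false,false,false,false,false,false,false,true,true,true],![false,false,false,false,false,true,true,false,false,true],![false,false,false,false,true,false,true,false,true,false],![false,false,false,false,true,true,false,true,false,false],![false,false,true,true,false,false,false,false,false,true],![false,true,false,true,false,false,false,false,true,false],![false,true,true,false,false,false,false,true,false,false],![true,false,false,true,false,false,true,false,false,false],![true,false,true,false,false,true,false,false,false,false],![true,true,false,false,true,false,false,false,false,false]]
def st : Fin 5 → Finset (Fin 10) := ![{0,1,2,3},{0,4,5,6},{1,4,7,8},{2,5,7,9},{3,6,8,9}]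
def c3 : Fin 10 → Fin 3 := ![0,2,0,1,0,1,1,1,2,1]
def tbl : List ((Fin 10 → Fin 10) × (Fin 10 → Fin 10)) := [
(![0,1,3,2,4,6,5,8,7,9], ![0,1,3,2,4,6,5,8,7,9]),
(![0,2,1,3,5,4,6,7,9,8], ![0,2,1,3,5,4,6,7,9,8]),
(![0,3,2,1,6,5,4,9,8,7], ![0,3,2,1,6,5,4,9,8,7]),
(![1,0,2,3,4,7,8,5,6,9], ![1,0,2,3,4,7,8,5,6,9]),
(![2,1,0,3,7,5,9,4,8,6], ![2,1,0,3,7,5,9,4,8,6]),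
(![3,1,2,0,8,9,6,7,4,5], ![3,1,2,0,8,9,6,7,4,5]),
(![0,4,5,6,1,2,3,7,8,9], ![0,4,5,6,1,2,3,7,8,9]),
(![4,1,7,8,0,5,6,2,3,9], ![4,1,7,8,0,5,6,2,3,9]),
(![5,7,2,9,4,0,6,1,8,3], ![5,7,2,9,4,0,6,1,8,3]),
(![6,8,9,3,4,5,0,7,1,2], ![6,8,9,3,4,5,0,7,1,2]),
(![1,0,3,2,4,8,7,6,5,9], ![1,0,3,2,4,8,7,6,5,9]),
(![2,3,0,1,9,5,7,6,8,4], ![2,3,0,1,9,5,7,6,8,4]),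
(![3,2,1,0,9,8,6,7,5,4], ![3,2,1,0,9,8,6,7,5,4]),
(![0,4,6,5,1,3,2,8,7,9], ![0,4,6,5,1,3,2,8,7,9]),
(![0,5,4,6,2,1,3,7,9,8], ![0,5,4,6,2,1,3,7,9,8]),
(![0,6,5,4,3,2,1,9,8,7], ![0,6,5,4,3,2,1,9,8,7]),
(![4,1,8,7,0,6,5,3,2,9], ![4,1,8,7,0,6,5,3,2,9]),
(![7,1,4,8,2,5,9,0,3,6], ![7,1,4,8,2,5,9,0,3,6]),
(![8,1,7,4,3,9,6,2,0,5], ![8,1,7,4,3,9,6,2,0,5]),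
(![5,9,2,7,6,0,4,3,8,1], ![5,9,2,7,6,0,4,3,8,1]),
(![7,5,2,9,4,1,8,0,6,3], ![7,5,2,9,4,1,8,0,6,3]),
(![9,7,2,5,8,3,6,1,4,0], ![9,7,2,5,8,3,6,1,4,0]),
(![6,9,8,3,5,4,0,7,2,1], ![6,9,8,3,5,4,0,7,2,1]),
(![8,6,9,3,4,7,1,5,0,2], ![8,6,9,3,4,7,1,5,0,2]),
(![9,8,6,3,7,5,2,4,1,0], ![9,8,6,3,7,5,2,4,1,0]),
(![0,2,3,1,5,6,4,9,7,8], ![0,3,1,2,6,4,5,8,9,7]),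
(![0,3,1,2,6,4,5,8,9,7], ![0,2,3,1,5,6,4,9,7,8]),
(![1,2,0,3,7,4,8,5,9,6], ![2,0,1,3,5,7,9,4,6,8]),
(![1,3,2,0,8,7,4,9,6,5], ![3,0,2,1,6,9,8,5,4,7]),
(![2,0,1,3,5,7,9,4,6,8], ![1,2,0,3,7,4,8,5,9,6]),
(![2,1,3,0,7,9,5,8,4,6], ![3,1,0,2,8,6,9,4,7,5]),
(![3,0,2,1,6,9,8,5,4,7], ![1,3,2,0,8,7,4,9,6,5]),
(![3,1,0,2,8,6,9,4,7,5], ![2,1,3,0,7,9,5,8,4,6]),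
(![0,5,6,4,2,3,1,9,7,8], ![0,6,4,5,3,1,2,8,9,7]),
(![0,6,4,5,3,1,2,8,9,7], ![0,5,6,4,2,3,1,9,7,8]),
(![4,0,5,6,1,7,8,2,3,9], ![1,4,7,8,0,2,3,5,6,9]),
(![4,0,6,5,1,8,7,3,2,9], ![1,4,8,7,0,3,2,6,5,9]),
(![5,4,0,6,7,2,9,1,8,3], ![2,7,5,9,1,0,3,4,8,6]),
(![5,6,0,4,9,2,7,3,8,1], ![2,9,5,7,3,0,1,6,8,4]),
(![6,4,5,0,8,9,3,7,1,2], ![3,8,9,6,1,2,0,7,4,5]),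
(![6,5,4,0,9,8,3,7,2,1], ![3,9,8,6,2,1,0,7,5,4]),
(![1,4,7,8,0,2,3,5,6,9], ![4,0,5,6,1,7,8,2,3,9]),
(![1,4,8,7,0,3,2,6,5,9], ![4,0,6,5,1,8,7,3,2,9]),
(![4,7,1,8,5,0,6,2,9,3], ![5,2,7,9,0,4,6,1,3,8]),
(![4,8,7,1,6,5,0,9,3,2], ![6,3,9,8,0,5,4,2,1,7]),
(![7,1,8,4,2,9,5,3,0,6], ![8,1,4,7,3,6,9,0,2,5]),
(![7,8,4,1,9,5,2,6,3,0], ![9,3,6,8,2,5,7,0,1,4]),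
(![8,1,4,7,3,6,9,0,2,5], ![7,1,8,4,2,9,5,3,0,6]),
(![8,7,1,4,9,3,6,2,5,0], ![9,2,7,5,3,8,6,1,0,4]),
(![2,7,5,9,1,0,3,4,8,6], ![5,4,0,6,7,2,9,1,8,3]),
(![2,9,5,7,3,0,1,6,8,4], ![5,6,0,4,9,2,7,3,8,1]),
(![5,2,7,9,0,4,6,1,3,8], ![4,7,1,8,5,0,6,2,9,3]),
(![5,7,9,2,4,6,0,8,1,3], ![6,8,3,9,4,0,5,1,7,2]),
(![7,5,9,2,4,8,1,6,0,3], ![8,6,3,9,4,1,7,0,5,2]),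
(![7,9,2,5,8,1,4,3,6,0], ![9,5,2,7,6,3,8,0,4,1]),
(![9,2,7,5,3,8,6,1,0,4], ![8,7,1,4,9,3,6,2,5,0]),
(![9,5,2,7,6,3,8,0,4,1], ![7,9,2,5,8,1,4,3,6,0]),
(![3,8,9,6,1,2,0,7,4,5], ![6,4,5,0,8,9,3,7,1,2]),
(![3,9,8,6,2,1,0,7,5,4], ![6,5,4,0,9,8,3,7,2,1]),
(![6,3,9,8,0,5,4,2,1,7], ![4,8,7,1,6,5,0,9,3,2]),
(![6,8,3,9,4,0,5,1,7,2], ![5,7,9,2,4,6,0,8,1,3]),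
(![8,6,3,9,4,1,7,0,5,2], ![7,5,9,2,4,8,1,6,0,3]),
(![8,9,6,3,7,4,1,5,2,0], ![9,6,8,3,5,7,2,4,0,1]),
(![9,3,6,8,2,5,7,0,1,4], ![7,8,4,1,9,5,2,6,3,0]),
(![9,6,8,3,5,7,2,4,0,1], ![8,9,6,3,7,4,1,5,2,0]),
(![1,2,3,0,7,8,4,9,5,6], ![3,0,1,2,6,8,9,4,5,7]),
(![1,3,0,2,8,4,7,6,9,5], ![2,0,3,1,5,9,7,6,4,8]),
(![2,0,3,1,5,9,7,6,4,8], ![1,3,0,2,8,4,7,6,9,5]),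
(![2,3,1,0,9,7,5,8,6,4], ![3,2,0,1,9,6,8,5,7,4]),
(![3,0,1,2,6,8,9,4,5,7], ![1,2,3,0,7,8,4,9,5,6]),
(![3,2,0,1,9,6,8,5,7,4], ![2,3,1,0,9,7,5,8,6,4]),
(![4,5,0,6,7,1,8,2,9,3], ![2,5,7,9,0,1,3,4,6,8]),
(![4,5,6,0,7,8,1,9,2,3], ![3,6,8,9,0,1,2,4,5,7]),
(![4,6,0,5,8,1,7,3,9,2], ![2,5,9,7,0,3,1,6,4,8]),
(![4,6,5,0,8,7,1,9,3,2], ![3,6,9,8,0,2,1,5,4,7]),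
(![5,0,4,6,2,7,9,1,3,8], ![1,7,4,8,2,0,3,5,9,6]),
(![5,0,6,4,2,9,7,3,1,8], ![1,8,4,7,3,0,2,6,9,5]),
(![5,4,6,0,7,9,2,8,1,3], ![3,8,6,9,1,0,2,4,7,5]),
(![5,6,4,0,9,7,2,8,3,1], ![3,9,6,8,2,0,1,5,7,4]),
(![6,0,4,5,3,8,9,1,2,7], ![1,7,8,4,2,3,0,9,5,6]),
(![6,0,5,4,3,9,8,2,1,7], ![1,8,7,4,3,2,0,9,6,5]),
(![6,4,0,5,8,3,9,1,7,2], ![2,7,9,5,1,3,0,8,4,6]),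
(![6,5,0,4,9,3,8,2,7,1], ![2,9,7,5,3,1,0,8,6,4]),
(![1,7,4,8,2,0,3,5,9,6], ![5,0,4,6,2,7,9,1,3,8]),
(![1,7,8,4,2,3,0,9,5,6], ![6,0,4,5,3,8,9,1,2,7]),
(![1,8,4,7,3,0,2,6,9,5], ![5,0,6,4,2,9,7,3,1,8]),
(![1,8,7,4,3,2,0,9,6,5], ![6,0,5,4,3,9,8,2,1,7]),
(![4,7,8,1,5,6,0,9,2,3], ![6,3,8,9,0,4,5,1,2,7]),
(![4,8,1,7,6,0,5,3,9,2], ![5,2,9,7,0,6,4,3,1,8]),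
(![7,4,1,8,5,2,9,0,6,3], ![7,2,5,9,1,4,8,0,3,6]),
(![7,4,8,1,5,9,2,6,0,3], ![8,3,6,9,1,4,7,0,2,5]),
(![7,8,1,4,9,2,5,3,6,0], ![9,2,5,7,3,6,8,0,1,4]),
(![8,4,1,7,6,3,9,0,5,2], ![7,2,9,5,1,8,4,3,0,6]),
(![8,4,7,1,6,9,3,5,0,2], ![8,3,9,6,1,7,4,2,0,5]),
(![8,7,4,1,9,6,3,5,2,0], ![9,3,8,6,2,7,5,1,0,4]),
(![2,5,7,9,0,1,3,4,6,8], ![4,5,0,6,7,1,8,2,9,3]),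
(![2,5,9,7,0,3,1,6,4,8], ![4,6,0,5,8,1,7,3,9,2]),
(![2,7,9,5,1,3,0,8,4,6], ![6,4,0,5,8,3,9,1,7,2]),
(![2,9,7,5,3,1,0,8,6,4], ![6,5,0,4,9,3,8,2,7,1]),
(![5,2,9,7,0,6,4,3,1,8], ![4,8,1,7,6,0,5,3,9,2]),
(![5,9,7,2,6,4,0,8,3,1], ![6,9,3,8,5,0,4,2,7,1]),
(![7,2,5,9,1,4,8,0,3,6], ![7,4,1,8,5,2,9,0,6,3]),
(![7,2,9,5,1,8,4,3,0,6], ![8,4,1,7,6,3,9,0,5,2]),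
(![7,9,5,2,8,4,1,6,3,0], ![9,6,3,8,5,2,7,0,4,1]),
(![9,2,5,7,3,6,8,0,1,4], ![7,8,1,4,9,2,5,3,6,0]),
(![9,5,7,2,6,8,3,4,0,1], ![8,9,3,6,7,1,4,2,5,0]),
(![9,7,5,2,8,6,3,4,1,0], ![9,8,3,6,7,2,5,1,4,0]),
(![3,6,8,9,0,1,2,4,5,7], ![4,5,6,0,7,8,1,9,2,3]),
(![3,6,9,8,0,2,1,5,4,7], ![4,6,5,0,8,7,1,9,3,2]),
(![3,8,6,9,1,0,2,4,7,5], ![5,4,6,0,7,9,2,8,1,3]),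
(![3,9,6,8,2,0,1,5,7,4], ![5,6,4,0,9,7,2,8,3,1]),
(![6,3,8,9,0,4,5,1,2,7], ![4,7,8,1,5,6,0,9,2,3]),
(![6,9,3,8,5,0,4,2,7,1], ![5,9,7,2,6,4,0,8,3,1]),
(![8,3,6,9,1,4,7,0,2,5], ![7,4,8,1,5,9,2,6,0,3]),
(![8,3,9,6,1,7,4,2,0,5], ![8,4,7,1,6,9,3,5,0,2]),
(![8,9,3,6,7,1,4,2,5,0], ![9,5,7,2,6,8,3,4,0,1]),
(![9,3,8,6,2,7,5,1,0,4], ![8,7,4,1,9,6,3,5,2,0]),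
(![9,6,3,8,5,2,7,0,4,1], ![7,9,5,2,8,4,1,6,3,0]),
(![9,8,3,6,7,2,5,1,4,0], ![9,7,5,2,8,6,3,4,1,0])]
def q1 : Fin 5 → Fin 10 := ![0,0,1,2,3]
def q2 : Fin 5 → Fin 10 := ![1,4,4,5,6]
def q3 : Fin 5 → Fin 10 := ![2,5,7,7,8]
def q4 : Fin 5 → Fin 10 := ![3,6,8,9,9]

def idx (s : Finset (Fin 5)) : Fin 10 :=
  if 0 ∈ s then (if 1 ∈ s then 0 else if 2 ∈ s then 1 else if 3 ∈ s then 2 else 3)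
  else if 1 ∈ s then (if 2 ∈ s then 4 else if 3 ∈ s then 5 else 6)
  else if 2 ∈ s then (if 3 ∈ s then 7 else 8)
  else 9

theorem plcard : ∀ v, (pl v).card = 2 := by decide

def E (v : Fin 10) : V := ⟨pl v, plcard v⟩

def d (s : V) : Fin 10 := idx s.val

theorem dE : ∀ v, d (E v) = v := by decide
theorem Ed : ∀ s, E (d s) = s := by decide

theorem hEinj : Function.Injective E := fun a b h => by rw [← dE a, ← dE b, h]
theorem hdinj : ∀ s t : V, d s = d t → s = t := fun s t h => by rw [← Ed s, ← Ed t, h]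
theorem hplds : ∀ s : V, pl (d s) = s.val := fun s => congrArg Subtype.val (Ed s)

theorem adjB : ∀ u v : Fin 10, Disjoint (pl u) (pl v) ↔ M u v = true := by decide

theorem adjE : ∀ u v : Fin 10, petersenGraph.Adj (E u) (E v) ↔ M u v = true := adjB

theorem A1 : ∀ (i : Fin 5) (v : Fin 10), i ∈ pl v ↔ (v = q1 i ∨ v = q2 i ∨ v = q3 i ∨ v = q4 i) := by
  decide

theorem A2 : ∀ i : Fin 5, q1 i ≠ q2 i ∧ q1 i ≠ q3 i ∧ q1 i ≠ q4 i ∧ q2 i ≠ q3 i ∧ q2 i ≠ q4 i ∧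
    q3 i ≠ q4 i := by decide

theorem A4 : ∀ i : Fin 5, M (q1 i) (q2 i) = false ∧ M (q1 i) (q3 i) = false ∧
    M (q1 i) (q4 i) = false ∧ M (q2 i) (q3 i) = false ∧ M (q2 i) (q4 i) = false ∧
    M (q3 i) (q4 i) = false := by decide

theorem A5 : ∀ i i' : Fin 5, i' ∈ pl (q1 i) → i' ∈ pl (q2 i) → i' ∈ pl (q3 i) →
    i' ∈ pl (q4 i) → i = i' := by decide

set_option synthInstance.maxSize 100000 in
set_option synthInstance.maxHeartbeats 400000 in
theorem A3 : ∀ w x y z : Fin 10, (w≠x ∧ w≠y ∧ w≠z ∧ x≠y ∧ x≠z ∧ y≠z) →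
    (M w x = false ∧ M w y = false ∧ M w z = false ∧ M x y = false ∧ M x z = false ∧
      M y z = false) →
    ∃ i, ∀ v, (v = w ∨ v = x ∨ v = y ∨ v = z) ↔ (v = q1 i ∨ v = q2 i ∨ v = q3 i ∨ v = q4 i) := by
  decide

abbrev TT := (Fin 10 → Fin 10) × (Fin 10 → Fin 10)

theorem tblfix : ∀ p ∈ tbl, ∃ v, p.1 v ≠ v :=
  @of_decide_eq_true _ (List.decidableBAll (fun p : TT => ∃ v, p.1 v ≠ v) tbl) rfl

theorem tblinv : ∀ p ∈ tbl, (∀ v, p.2 (p.1 v) = v) ∧ (∀ v, p.1 (p.2 v) = v) :=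
  @of_decide_eq_true _
    (List.decidableBAll (fun p : TT => (∀ v, p.2 (p.1 v) = v) ∧ (∀ v, p.1 (p.2 v) = v)) tbl) rfl

theorem tbladj : ∀ p ∈ tbl, ∀ u v, M (p.1 u) (p.1 v) = M u v :=
  @of_decide_eq_true _ (List.decidableBAll (fun p : TT => ∀ u v, M (p.1 u) (p.1 v) = M u v) tbl) rfl

theorem heavy : ∀ b0 b1 b2 b3 b4 b5 b6 b7 b8 b9 : Fin 2,
    ∃ p ∈ tbl, (∀ v, ![b0,b1,b2,b3,b4,b5,b6,b7,b8,b9] (p.1 v) =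
      ![b0,b1,b2,b3,b4,b5,b6,b7,b8,b9] v) := by decide

theorem rigid : ∀ a0 a1 a2 a3 a4 : Fin 5, Function.Injective ![a0,a1,a2,a3,a4] →
    (∀ v, c3 (idx ((pl v).image ![a0,a1,a2,a3,a4])) = c3 v) →
    ∀ v, idx ((pl v).image ![a0,a1,a2,a3,a4]) = v := by decide

end PetersenAux
namespace PetersenAux

/-- The distinguishing 3-colouring. -/
def cc : V → Fin 3 := fun s => c3 (d s)

theorem dist3 : IsDistinguishing petersenGraph cc := by
  intro γ hcol
  set F : Fin 10 → Fin 10 := fun v => d (γ (E v)) with hFdef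
  have hFinj : Function.Injective F := by
    intro a b h
    exact hEinj (γ.toEquiv.injective (hdinj _ _ h))
  have hadjF : ∀ u v, M (F u) (F v) = M u v := by
    intro u v
    have h1 : (M (F u) (F v) = true) ↔ (M u v = true) := by
      constructor
      · intro h
        have h2 : petersenGraph.Adj (E (F u)) (E (F v)) := (adjE _ _).mpr h
        rw [show E (F u) = γ (E u) from Ed _, show E (F v) = γ (E v) from Ed _] at h2
        exact (adjE u v).mp (γ.map_adj_iff.mp h2)
      · intro h
        have h2 : petersenGraph.Adj (γ (E u)) (γ (E v)) := γ.map_adj_iff.mpr ((adjE u v).mpr h)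
        rw [show γ (E u) = E (F u) from (Ed _).symm, show γ (E v) = E (F v) from (Ed _).symm] at h2
        exact (adjE _ _).mp h2
    cases hu : M (F u) (F v) <;> cases hv : M u v <;> simp_all
  have classify : ∀ i : Fin 5, ∃ j, ∀ v,
      (v = F (q1 i) ∨ v = F (q2 i) ∨ v = F (q3 i) ∨ v = F (q4 i)) ↔
      (v = q1 j ∨ v = q2 j ∨ v = q3 j ∨ v = q4 j) := by
    intro i
    obtain ⟨h12, h13, h14, h23, h24, h34⟩ := A2 i
    obtain ⟨m12, m13, m14, m23, m24, m34⟩ := A4 i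
    refine A3 _ _ _ _ ⟨?_, ?_, ?_, ?_, ?_, ?_⟩ ?_
    · exact fun h => h12 (hFinj h)
    · exact fun h => h13 (hFinj h)
    · exact fun h => h14 (hFinj h)
    · exact fun h => h23 (hFinj h)
    · exact fun h => h24 (hFinj h)
    · exact fun h => h34 (hFinj h)
    · rw [hadjF, hadjF, hadjF, hadjF, hadjF, hadjF]
      exact ⟨m12, m13, m14, m23, m24, m34⟩
  choose σ hσ using classify
  have hmem : ∀ (s : V) (i : Fin 5), i ∈ s.val → σ i ∈ (γ s).val := by
    intro s i hi
    have h1 : i ∈ pl (d s) := by rw [hplds]; exact hi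
    have h2 := (A1 i (d s)).mp h1
    have h3 : F (d s) = d (γ s) := by rw [hFdef]; simp only [Ed]
    have h4 : d (γ s) = q1 (σ i) ∨ d (γ s) = q2 (σ i) ∨ d (γ s) = q3 (σ i) ∨
        d (γ s) = q4 (σ i) := by
      refine (hσ i (d (γ s))).mp ?_
      rw [← h3]
      rcases h2 with h | h | h | h
      · exact Or.inl (by rw [h])
      · exact Or.inr (Or.inl (by rw [h]))
      · exact Or.inr (Or.inr (Or.inl (by rw [h])))
      · exact Or.inr (Or.inr (Or.inr (by rw [h])))
    have h5 : σ i ∈ pl (d (γ s)) := (A1 (σ i) (d (γ s))).mpr h4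
    rw [hplds] at h5
    exact h5
  have hσinj : Function.Injective σ := by
    intro i i' h
    have key : ∀ a, (a = q1 i ∨ a = q2 i ∨ a = q3 i ∨ a = q4 i) → i' ∈ pl a := by
      intro a ha
      have h1 : F a = q1 (σ i) ∨ F a = q2 (σ i) ∨ F a = q3 (σ i) ∨ F a = q4 (σ i) := by
        refine (hσ i (F a)).mp ?_
        rcases ha with h' | h' | h' | h'
        · exact Or.inl (by rw [h'])
        · exact Or.inr (Or.inl (by rw [h']))
        · exact Or.inr (Or.inr (Or.inl (by rw [h'])))
        · exact Or.inr (Or.inr (Or.inr (by rw [h'])))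
      rw [h] at h1
      have h2 := (hσ i' (F a)).mpr h1
      have h3 : a = q1 i' ∨ a = q2 i' ∨ a = q3 i' ∨ a = q4 i' := by
        rcases h2 with h' | h' | h' | h'
        · exact Or.inl (hFinj h')
        · exact Or.inr (Or.inl (hFinj h'))
        · exact Or.inr (Or.inr (Or.inl (hFinj h')))
        · exact Or.inr (Or.inr (Or.inr (hFinj h')))
      exact (A1 i' a).mpr h3
    exact A5 i i' (key _ (Or.inl rfl)) (key _ (Or.inr (Or.inl rfl)))
      (key _ (Or.inr (Or.inr (Or.inl rfl)))) (key _ (Or.inr (Or.inr (Or.inr rfl))))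
  have himg : ∀ s : V, (γ s).val = s.val.image σ := by
    intro s
    obtain ⟨a, b, hab, hs⟩ := Finset.card_eq_two.mp s.property
    have ha : σ a ∈ (γ s).val := hmem s a (by rw [hs]; simp)
    have hb : σ b ∈ (γ s).val := hmem s b (by rw [hs]; simp)
    have himg2 : s.val.image σ = {σ a, σ b} := by
      rw [hs, Finset.image_insert, Finset.image_singleton]
    rw [himg2]
    have hsub : ({σ a, σ b} : Finset (Fin 5)) ⊆ (γ s).val := by
      intro x hx
      rcases Finset.mem_insert.mp hx with h | h
      · rw [h]; exact ha
      · rw [Finset.mem_singleton.mp h]; exact hb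
    have hcard : ({σ a, σ b} : Finset (Fin 5)).card = 2 :=
      Finset.card_pair (fun h => hab (hσinj h))
    have := Finset.eq_of_subset_of_card_le hsub (by rw [(γ s).property, hcard])
    exact this.symm
  have hvec : ![σ 0, σ 1, σ 2, σ 3, σ 4] = σ := by
    funext x; fin_cases x <;> rfl
  have hcol' : ∀ v : Fin 10, c3 (idx ((pl v).image σ)) = c3 v := by
    intro v
    have h1 : (pl v).image σ = (γ (E v)).val := (himg (E v)).symm
    rw [h1]
    calc c3 (idx (γ (E v)).val) = cc (γ (E v)) := rfl
      _ = cc (E v) := hcol _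
      _ = c3 v := by show c3 (d (E v)) = c3 v; rw [dE]
  have hfix := rigid (σ 0) (σ 1) (σ 2) (σ 3) (σ 4) (by rw [hvec]; exact hσinj)
    (by rw [hvec]; exact hcol')
  rw [hvec] at hfix
  intro s
  refine hdinj _ _ ?_
  calc d (γ s) = idx ((γ s).val) := rfl
    _ = idx ((pl (d s)).image σ) := by rw [himg s, hplds]
    _ = d s := hfix (d s)

theorem no2 : ¬ ∃ c : V → Fin 2, IsDistinguishing petersenGraph c := by
  rintro ⟨c, hc⟩
  obtain ⟨p, hptbl, hppres⟩ := heavy (c (E 0)) (c (E 1)) (c (E 2)) (c (E 3)) (c (E 4))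
    (c (E 5)) (c (E 6)) (c (E 7)) (c (E 8)) (c (E 9))
  have hv : ∀ v, ![c (E 0), c (E 1), c (E 2), c (E 3), c (E 4), c (E 5), c (E 6), c (E 7),
      c (E 8), c (E 9)] v = c (E v) := by
    intro v; fin_cases v <;> rfl
  obtain ⟨hinv1, hinv2⟩ := tblinv p hptbl
  have hadj := tbladj p hptbl
  let e : V ≃ V :=
    { toFun := fun s => E (p.1 (d s))
      invFun := fun s => E (p.2 (d s))
      left_inv := by intro s; simp only [dE, hinv1, Ed]
      right_inv := by intro s; simp only [dE, hinv2, Ed] }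
  have mri : ∀ {s t : V}, petersenGraph.Adj (e s) (e t) ↔ petersenGraph.Adj s t := by
    intro s t
    show petersenGraph.Adj (E (p.1 (d s))) (E (p.1 (d t))) ↔ _
    rw [adjE, hadj, ← adjE, Ed, Ed]
  let γ : petersenGraph ≃g petersenGraph := ⟨e, mri⟩
  have hpres : ∀ v, c (γ v) = c v := by
    intro s
    show c (E (p.1 (d s))) = c s
    rw [← hv (p.1 (d s)), hppres (d s), hv (d s), Ed]
  obtain ⟨v0, hv0⟩ := tblfix p hptbl
  have h1 : γ (E v0) = E v0 := hc γ hpres (E v0)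
  have h2 : E (p.1 v0) = E v0 := by
    calc E (p.1 v0) = E (p.1 (d (E v0))) := by rw [dE]
      _ = E v0 := h1
  exact hv0 (hEinj h2)

end PetersenAux

open PetersenAux in
theorem distinguishingNumber_petersenGraph :
    distinguishingNumber petersenGraph = 3 := by
  have h3 : 3 ∈ {k | ∃ c : V → Fin k, IsDistinguishing petersenGraph c} := ⟨cc, dist3⟩
  unfold distinguishingNumber
  refine le_antisymm (Nat.sInf_le h3) ?_
  by_contra h
  push_neg at h
  have hne : {k | ∃ c : V → Fin k, IsDistinguishing petersenGraph c}.Nonempty := ⟨3, h3⟩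
  obtain ⟨c, hc⟩ := Nat.sInf_mem hne
  have hle : sInf {k | ∃ c : V → Fin k, IsDistinguishing petersenGraph c} ≤ 2 :=
    Nat.lt_succ_iff.mp h
  refine no2 ⟨fun v => Fin.castLE hle (c v), ?_⟩
  intro γ hcol v
  refine hc γ (fun w => ?_) v
  have := congrArg Fin.val (hcol w)
  exact Fin.ext this
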